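/- arXiv:2212.08293 — 2 statements merged into one kernel-verified Lean document; each statement's English description precedes it below -/
import Mathlib

section
/- Let Q be a simple random walk excursion on ℤ starting and ending at L, conditioned to go right (so its range is contained in [L, ∞)). Let E > L be the maximum value attained by Q. For any site i strictly between L and E, the conditional probability that Q visits i an even number of times (excluding the final return to L), given the parities of the visit counts at all sites in [L, i) and given E, lies strictly between 1/6 and 5/6. -/
open scoped ENNReal

/-- Weight of a nearest-neighbor path: each of its `length - 1` steps has probability 1/2. -/
noncomputable def pathWeight (q : List ℤ) : ℝ≥0∞ := (1/2 : ℝ≥0∞) ^ (q.length - 1)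

/-- Nearest-neighbor path on ℤ. -/
def IsNNPath (q : List ℤ) : Prop := List.Chain' (fun x y => y = x + 1 ∨ y = x - 1) q

/-- A simple random walk excursion from `L`: starts at `L`, ends at its first return to `L`. -/
def IsExcursion (L : ℤ) (q : List ℤ) : Prop :=
  IsNNPath q ∧ q.head? = some L ∧ q.getLast? = some L ∧ 3 ≤ q.length ∧
    ∀ x ∈ q.dropLast.tail, x ≠ L

/-- An excursion to the right: all sites visited are ≥ L. -/
def IsRightExcursion (L : ℤ) (q : List ℤ) : Prop :=
  IsExcursion L q ∧ ∀ x ∈ q, L ≤ x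

/-- Local time at `i`: number of visits, excluding the final return point. -/
def localTime (q : List ℤ) (i : ℤ) : ℕ := q.dropLast.count i

/-- Parity of the local time at `i`. -/
def parity (q : List ℤ) (i : ℤ) : ℕ := localTime q i % 2

section Aux
def stepsOf : List ℤ → List Bool
  | [] => []
  | [_] => []
  | x :: y :: t => (decide (y = x + 1)) :: stepsOf (y :: t)

lemma stepsOf_inj : ∀ (q q' : List ℤ), IsNNPath q → IsNNPath q' →
    q.head? = q'.head? → stepsOf q = stepsOf q' → q = q'
  | [], [], _, _, _, _ => rfl
  | [], _ :: _, _, _, hh, _ => by simp at hh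
  | _ :: _, [], _, _, hh, _ => by simp at hh
  | [x], [y], _, _, hh, _ => by simp at hh; simp [hh]
  | [x], y :: z :: t, _, _, hh, hs => by simp [stepsOf] at hs
  | x :: z :: t, [y], _, _, hh, hs => by simp [stepsOf] at hs
  | x :: a :: t, y :: b :: t', hq, hq', hh, hs => by
    simp at hh
    subst hh
    simp only [stepsOf, List.cons.injEq] at hs
    have hab : a = b := by
      rcases List.isChain_cons_cons.1 hq with ⟨h1, -⟩
      rcases List.isChain_cons_cons.1 hq' with ⟨h2, -⟩
      rcases h1 with h1 | h1 <;> rcases h2 with h2 | h2 <;>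
        simp [h1, h2] at hs ⊢ <;> omega
    subst hab
    have := stepsOf_inj (a :: t) (a :: t') (List.isChain_cons_cons.1 hq).2
      (List.isChain_cons_cons.1 hq').2 rfl hs.2
    simp at this
    simp [this]

lemma stepsOf_getElem : ∀ (q : List ℤ) (j : ℕ) (h : j + 1 < q.length)
    (h' : j < (stepsOf q).length),
    (stepsOf q)[j] = decide (q[j+1] = q[j]'(by omega) + 1)
  | x :: y :: t, 0, h, h' => by simp [stepsOf]
  | x :: y :: t, (j+1), h, h' => by
      have := stepsOf_getElem (y :: t) j (by simpa using h)
        (by simp [stepsOf] at h' ⊢; omega)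
      simpa [stepsOf] using this

lemma stepsOf_length : ∀ q : List ℤ, (stepsOf q).length = q.length - 1
  | [] => rfl
  | [_] => rfl
  | x :: y :: t => by
      have := stepsOf_length (y :: t)
      simp [stepsOf] at this ⊢
      omega

-- all-true block ⇒ increase by b
lemma block_up (q : List ℤ) (u b : ℕ) (h : u + b < q.length)
    (hs : ∀ j, j < b → ∃ h' : u + j < (stepsOf q).length, (stepsOf q)[u+j] = true) :
    q[u + b]'h = q[u]'(by omega) + b := by
  induction b with
  | zero => simp
  | succ n ih =>
    have h1 : u + n < q.length := by omega
    have := ih (by omega) (fun j hj => hs j (by omega))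
    obtain ⟨h', hv⟩ := hs n (by omega)
    rw [stepsOf_getElem q (u+n) (by omega) h'] at hv
    have : q[u + (n+1)]'(by omega) = q[u+n]'(by omega) + 1 := by
      have := of_decide_eq_true hv
      convert this using 2 <;> omega
    omega



lemma takeWhile_append_cons {α} (p : α → Bool) (A : List α) (x : α) (r : List α)
    (hA : ∀ a ∈ A, p a = true) (hx : p x = false) :
    ((A ++ x :: r).takeWhile p = A) ∧ ((A ++ x :: r).dropWhile p = x :: r) := by
  induction A with
  | nil => simp [List.takeWhile_cons, List.dropWhile_cons, hx]
  | cons a A ih =>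
    have ha : p a = true := hA a (by simp)
    have := ih (fun b hb => hA b (by simp [hb]))
    simp [List.takeWhile_cons, List.dropWhile_cons, ha, this.1, this.2]

-- discrete IVT
lemma mem_of_between : ∀ (q : List ℤ) (i : ℤ), IsNNPath q →
    (∀ h : q ≠ [], q.head h ≤ i) → ∀ x ∈ q, i ≤ x → i ∈ q := by
  intro q
  induction q with
  | nil => intro i _ _ x hx; simp at hx
  | cons y t ih =>
    intro i hq hh x hx hix
    rcases eq_or_lt_of_le (hh (by simp)) with h | h
    · simp at h; simp [h]
    · simp at h
      rcases List.mem_cons.1 hx with hx | hx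
      · omega
      · have ht : IsNNPath t := (List.isChain_cons.1 hq).2
        have : i ∈ t := by
          apply ih i ht _ x hx hix
          intro hne
          have := (List.isChain_cons.1 hq).1 (t.head hne) (by simp [List.head?_eq_head hne])
          rcases this with h' | h' <;> omega
        simp [this]

variable {L E i : ℤ}

noncomputable def phi (i : ℤ) (q : List ℤ) : List ℤ :=
  q.takeWhile (fun x => x != i) ++ i :: (i+1) :: q.dropWhile (fun x => x != i)

lemma phi_inj : Function.Injective (phi i) := by
  intro q q' h
  unfold phi at h
  have key : ∀ r : List ℤ,
      (r.takeWhile (fun x => x != i) ++ i :: (i+1) :: r.dropWhile (fun x => x != i)).takeWhile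
        (fun x => x != i) = r.takeWhile (fun x => x != i) :=
    fun r => (takeWhile_append_cons _ _ _ _
      (fun a ha => List.mem_takeWhile_imp (p := fun x => x != i) ha) (by simp)).1
  have h1 : q.takeWhile (fun x => x != i) = q'.takeWhile (fun x => x != i) := by
    rw [← key q, ← key q', h]
  rw [h1] at h
  have h2 := List.append_cancel_left h
  simp only [List.cons.injEq] at h2
  calc q = q.takeWhile (fun x => x != i) ++ q.dropWhile (fun x => x != i) :=
        List.takeWhile_append_dropWhile.symm
    _ = q'.takeWhile (fun x => x != i) ++ q'.dropWhile (fun x => x != i) := by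
        rw [h1, h2.2.2]
    _ = q' := List.takeWhile_append_dropWhile

lemma dropWhile_eq_cons {q : List ℤ} (h : i ∈ q) :
    ∃ B, q.dropWhile (fun x => x != i) = i :: B := by
  induction q with
  | nil => simp at h
  | cons y t ih =>
    by_cases hy : y = i
    · exact ⟨t, by simp [List.dropWhile_cons, hy]⟩
    · rcases List.mem_cons.1 h with h' | h'
      · omega
      · obtain ⟨B, hB⟩ := ih h'
        exact ⟨B, by simp [List.dropWhile_cons, hy, hB]⟩

lemma getLast?_cons_cons' (a b : ℤ) (l : List ℤ) :
    (a :: b :: l).getLast? = (b :: l).getLast? := rfl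

lemma phi_spec (hLi : L < i) (hiE : i < E) (q : List ℤ)
    (hq : IsRightExcursion L q) (hmax : q.maximum = (E : WithBot ℤ)) :
    IsRightExcursion L (phi i q) ∧ (phi i q).maximum = (E : WithBot ℤ) ∧
    (∀ j : ℤ, j ≠ i → j ≠ i + 1 → localTime (phi i q) j = localTime q j) ∧
    localTime (phi i q) i = localTime q i + 1 ∧
    pathWeight q = 4 * pathWeight (phi i q) := by
  obtain ⟨⟨hnn, hhead, hlast, hlen, hint⟩, hge⟩ := hq
  obtain ⟨hmemE, hleE⟩ := List.maximum_eq_coe_iff.1 hmax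
  have hqne : q ≠ [] := by rintro rfl; simp at hhead
  have hheadL : q.head hqne = L := by
    have := List.head?_eq_head hqne
    rw [hhead] at this; exact (Option.some_injective _ this.symm)
  have hiq : i ∈ q := by
    apply mem_of_between q i hnn _ E hmemE (le_of_lt hiE)
    intro h; rw [hheadL]; exact le_of_lt hLi
  obtain ⟨B, hB⟩ := dropWhile_eq_cons hiq
  obtain ⟨A, hA⟩ : ∃ A, q.takeWhile (fun x => x != i) = A := ⟨_, rfl⟩
  have hqAB : q = A ++ i :: B := by
    conv_lhs => rw [← List.takeWhile_append_dropWhile (p := fun x => x != i) (l := q)]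
    rw [hA, hB]
  have hAne : ∀ a ∈ A, a ≠ i := by
    intro a ha
    rw [← hA] at ha
    simpa using List.mem_takeWhile_imp (p := fun x => x != i) ha
  -- A = L :: A'
  obtain ⟨A', rfl⟩ : ∃ A', A = L :: A' := by
    cases hAcase : A with
    | nil => rw [hAcase] at hqAB; rw [hqAB] at hhead; simp at hhead; omega
    | cons a A' =>
      rw [hAcase] at hqAB; rw [hqAB] at hhead; simp at hhead
      exact ⟨A', by rw [hhead]⟩
  -- B ≠ []
  have hBne : B ≠ [] := by
    rintro rfl
    rw [hqAB] at hlast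
    rw [List.getLast?_append] at hlast
    simp at hlast
    omega
  have hphi : phi i q = (L :: A') ++ i :: (i+1) :: i :: B := by
    unfold phi; rw [hA, hB]
  have hlenq : q.length = A'.length + 2 + B.length := by rw [hqAB]; simp; omega
  have hlenphi : (phi i q).length = q.length + 2 := by rw [hphi, hqAB]; simp; omega
  -- memberships
  have hmem_phi : ∀ x, x ∈ phi i q ↔ x ∈ q ∨ x = i + 1 := by
    intro x
    rw [hphi, hqAB]
    simp
    constructor
    · rintro (h|h|h|h|h) <;> tauto
    · rintro ((h|h|h|h)|h) <;> tauto
  refine ⟨⟨⟨?_, ?_, ?_, ?_, ?_⟩, ?_⟩, ?_, ?_, ?_, ?_⟩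
  · -- IsNNPath
    rw [hqAB] at hnn
    rw [hphi]
    unfold IsNNPath List.Chain' at hnn ⊢
    rw [List.isChain_append] at hnn ⊢
    refine ⟨hnn.1, ?_, ?_⟩
    · rw [List.isChain_cons_cons, List.isChain_cons_cons]
      exact ⟨Or.inl rfl, Or.inr (by ring), hnn.2.1⟩
    · intro x hx y hy
      apply hnn.2.2 x hx y
      simpa using hy
  · -- head?
    rw [hphi]; simp
  · -- getLast?
    rw [hphi, List.getLast?_append, getLast?_cons_cons', getLast?_cons_cons']
    rw [hqAB, List.getLast?_append] at hlast
    exact hlast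
  · -- length
    omega
  · -- interior
    have hphi2 : phi i q = ((L :: A') ++ [i, i+1, i]) ++ B := by rw [hphi]; simp
    have hq2 : q = ((L :: A') ++ [i]) ++ B := by rw [hqAB]; simp
    have hphi3 : (phi i q).dropLast.tail = (A' ++ [i, i+1, i]) ++ B.dropLast := by
      rw [hphi2, List.dropLast_append_of_ne_nil hBne]; simp
    have hq3 : q.dropLast.tail = (A' ++ [i]) ++ B.dropLast := by
      rw [hq2, List.dropLast_append_of_ne_nil hBne]; simp
    rw [hq3] at hint
    intro x hx
    rw [hphi3] at hx
    have hx' : x ∈ A' ∨ x ∈ B.dropLast ∨ x = i ∨ x = i + 1 := by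
      simp at hx; tauto
    rcases hx' with h | h | h | h
    · exact hint x (by simp [h])
    · exact hint x (by simp [h])
    · omega
    · omega
  · -- ≥ L
    intro x hx
    rcases (hmem_phi x).1 hx with h | h
    · exact hge x h
    · omega
  · -- maximum
    rw [List.maximum_eq_coe_iff]
    constructor
    · exact (hmem_phi E).2 (Or.inl hmemE)
    · intro x hx
      rcases (hmem_phi x).1 hx with h | h
      · exact hleE x h
      · omega
  · -- localTime j
    intro j hji hji1
    unfold localTime
    have hphi2 : phi i q = ((L :: A') ++ [i, i+1, i]) ++ B := by rw [hphi]; simp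
    have hq2 : q = ((L :: A') ++ [i]) ++ B := by rw [hqAB]; simp
    rw [hphi2, List.dropLast_append_of_ne_nil hBne,
      hq2, List.dropLast_append_of_ne_nil hBne]
    simp [List.count_append, List.count_cons, hji, hji1, Ne.symm hji, Ne.symm hji1]
  · -- localTime i
    unfold localTime
    have hphi2 : phi i q = ((L :: A') ++ [i, i+1, i]) ++ B := by rw [hphi]; simp
    have hq2 : q = ((L :: A') ++ [i]) ++ B := by rw [hqAB]; simp
    rw [hphi2, List.dropLast_append_of_ne_nil hBne,
      hq2, List.dropLast_append_of_ne_nil hBne]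
    simp [List.count_append, List.count_cons]
    omega
  · -- weight
    unfold pathWeight
    rw [hlenphi]
    have h1 : q.length + 2 - 1 = (q.length - 1) + 2 := by omega
    rw [h1, pow_add]
    have h2 : (2:ℝ≥0∞) * 2⁻¹ = 1 := ENNReal.mul_inv_cancel (by norm_num) (by norm_num)
    have h4 : (4 : ℝ≥0∞) * (1/2 : ℝ≥0∞) ^ 2 = 1 := by
      rw [pow_two, show (4:ℝ≥0∞) = 2 * 2 by norm_num,
        show (1/2 : ℝ≥0∞) = 2⁻¹ by rw [one_div], mul_mul_mul_comm, h2, one_mul]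
    calc (1/2 : ℝ≥0∞) ^ (q.length - 1)
        = ((4 : ℝ≥0∞) * (1/2)^2) * (1/2 : ℝ≥0∞) ^ (q.length - 1) := by rw [h4, one_mul]
      _ = 4 * ((1/2 : ℝ≥0∞) ^ (q.length - 1) * (1/2)^2) := by ring


def Good (b : ℕ) : Set (List Bool) :=
  {l | ∀ u, u + b ≤ l.length → (l.drop u).take b ≠ List.replicate b true}

lemma good_drop {b : ℕ} {l : List Bool} (h : l ∈ Good b) : l.drop b ∈ Good b := by
  intro u hu
  rw [List.drop_drop]
  apply h (b + u)
  simp at hu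
  omega

def lenFinset (n : ℕ) : Finset (List Bool) :=
  (Finset.univ : Finset (Fin n → Bool)).image List.ofFn

lemma mem_lenFinset {n : ℕ} {l : List Bool} : l ∈ lenFinset n ↔ l.length = n := by
  simp only [lenFinset, Finset.mem_image, Finset.mem_univ, true_and]
  constructor
  · rintro ⟨v, rfl⟩; simp
  · rintro rfl
    exact ⟨fun j => l.get j, by simp⟩

lemma card_lenFinset (n : ℕ) : (lenFinset n).card = 2 ^ n := by
  rw [lenFinset, Finset.card_image_of_injective _ List.ofFn_injective, Finset.card_univ]
  simp

lemma tsum_len_le (n : ℕ) (g : List Bool → ℝ≥0∞) (x : ℝ≥0∞)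
    (hg : ∀ l, g l ≠ 0 → l.length = n) (hgx : ∀ l, g l ≤ x) :
    ∑' l : List Bool, g l ≤ 2 ^ n * x := by
  rw [tsum_eq_sum (s := lenFinset n) (fun l hl => by
    by_contra h
    exact hl (mem_lenFinset.2 (hg l h)))]
  calc ∑ l ∈ lenFinset n, g l ≤ ∑ _l ∈ lenFinset n, x := Finset.sum_le_sum (fun l _ => hgx l)
    _ = (lenFinset n).card • x := Finset.sum_const x
    _ = 2 ^ n * x := by rw [card_lenFinset, nsmul_eq_mul]; norm_num

lemma tsum_block_le (b : ℕ) (x : ℝ≥0∞) :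
    ∑' a : List Bool, (if a.length = b ∧ a ≠ List.replicate b true then x else 0)
      ≤ (2 ^ b - 1 : ℕ) * x := by
  classical
  rw [tsum_eq_sum (s := (lenFinset b).erase (List.replicate b true)) (fun l hl => by
    simp only [Finset.mem_erase, mem_lenFinset] at hl
    rw [if_neg]; tauto)]
  calc ∑ l ∈ (lenFinset b).erase (List.replicate b true),
        (if l.length = b ∧ l ≠ List.replicate b true then x else 0)
      ≤ ∑ _l ∈ (lenFinset b).erase (List.replicate b true), x :=
        Finset.sum_le_sum (fun l _ => by split <;> simp)
    _ = ((lenFinset b).erase (List.replicate b true)).card • x := Finset.sum_const x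
    _ = (2 ^ b - 1 : ℕ) * x := by
        rw [Finset.card_erase_of_mem (mem_lenFinset.2 (by simp)), card_lenFinset, nsmul_eq_mul]

noncomputable def cseq (b n : ℕ) : ℝ≥0∞ :=
  ∑' l : List Bool, Set.indicator (Good b ∩ {l | l.length = n})
    (fun l => (1/2 : ℝ≥0∞) ^ l.length) l

lemma cseq_le_one (b n : ℕ) : cseq b n ≤ 1 := by
  have := tsum_len_le n (Set.indicator (Good b ∩ {l | l.length = n})
      (fun l => (1/2 : ℝ≥0∞) ^ l.length)) ((1/2 : ℝ≥0∞) ^ n)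
    (fun l hl => by
      by_contra h
      exact hl (Set.indicator_of_notMem (fun hm => h hm.2) _))
    (fun l => by
      by_cases hm : l ∈ Good b ∩ {l | l.length = n}
      · rw [Set.indicator_of_mem hm]
        have hn : l.length = n := hm.2
        rw [hn]
      · rw [Set.indicator_of_notMem hm]
        exact zero_le)
  calc cseq b n ≤ 2 ^ n * (1/2 : ℝ≥0∞) ^ n := this
    _ = 1 := by
        rw [← mul_pow, show (1/2 : ℝ≥0∞) = 2⁻¹ from one_div 2,
          ENNReal.mul_inv_cancel (by norm_num) (by norm_num), one_pow]

noncomputable def rho (b : ℕ) : ℝ≥0∞ := ((2 ^ b - 1 : ℕ) : ℝ≥0∞) * (1/2 : ℝ≥0∞) ^ b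

lemma split_inj : Function.Injective (fun l : List Bool => (l.take b', l.drop b')) := by
  intro l l' h
  simp only [Prod.mk.injEq] at h
  rw [← List.take_append_drop b' l, ← List.take_append_drop b' l', h.1, h.2]

lemma cseq_rec (b n : ℕ) (hb : 0 < b) : cseq b (n + b) ≤ rho b * cseq b n := by
  classical
  set F : List Bool → ℝ≥0∞ := fun l => (1/2 : ℝ≥0∞) ^ l.length with hF
  set φ1 : List Bool → ℝ≥0∞ := fun a =>
    if a.length = b ∧ a ≠ List.replicate b true then (1/2 : ℝ≥0∞) ^ b else 0 with hφ1
  set φ2 : List Bool → ℝ≥0∞ := fun s =>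
    Set.indicator (Good b ∩ {l | l.length = n}) F s with hφ2
  have hpt : ∀ l : List Bool,
      Set.indicator (Good b ∩ {l | l.length = n + b}) F l ≤ φ1 (l.take b) * φ2 (l.drop b) := by
    intro l
    by_cases hm : l ∈ Good b ∩ {l | l.length = n + b}
    · obtain ⟨hg, hlen⟩ := hm
      have hlen' : l.length = n + b := hlen
      have htake : (l.take b).length = b := by simp [hlen']
      have htne : l.take b ≠ List.replicate b true := by
        have := hg 0 (by omega)
        simpa using this
      have hdropg : l.drop b ∈ Good b := good_drop hg
      have hdlen : (l.drop b).length = n := by simp [hlen']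
      have h1 : φ1 (l.take b) = (1/2 : ℝ≥0∞) ^ b := by
        rw [hφ1]; exact if_pos ⟨htake, htne⟩
      have h2 : φ2 (l.drop b) = (1/2 : ℝ≥0∞) ^ n := by
        have hm2 : l.drop b ∈ Good b ∩ {l | l.length = n} := Set.mem_inter hdropg hdlen
        show (Good b ∩ {l | l.length = n}).indicator F (l.drop b) = (1/2 : ℝ≥0∞) ^ n
        rw [Set.indicator_of_mem hm2]
        show (1/2 : ℝ≥0∞) ^ (l.drop b).length = (1/2 : ℝ≥0∞) ^ n
        rw [hdlen]
      rw [Set.indicator_of_mem (Set.mem_inter hg hlen), h1, h2]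
      show (1/2 : ℝ≥0∞) ^ l.length ≤ _
      rw [hlen', pow_add]
      rw [mul_comm]
    · rw [Set.indicator_of_notMem hm]
      exact zero_le
  calc cseq b (n + b) ≤ ∑' l : List Bool, φ1 (l.take b) * φ2 (l.drop b) :=
        ENNReal.tsum_le_tsum hpt
    _ = ∑' l : List Bool,
          (fun p : List Bool × List Bool => φ1 p.1 * φ2 p.2) ((l.take b, l.drop b)) := rfl
    _ ≤ ∑' p : List Bool × List Bool, φ1 p.1 * φ2 p.2 :=
        ENNReal.tsum_comp_le_tsum_of_injective split_inj _
    _ = (∑' a : List Bool, φ1 a) * (∑' s : List Bool, φ2 s) := by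
        rw [ENNReal.tsum_prod (f := fun a s => φ1 a * φ2 s)]
        simp_rw [ENNReal.tsum_mul_left, ENNReal.tsum_mul_right]
    _ ≤ rho b * cseq b n := by
        apply mul_le_mul' _ (le_refl _)
        exact tsum_block_le b _

lemma rho_lt_one (b : ℕ) : rho b < 1 := by
  rw [rho]
  have h2b : ((2:ℝ≥0∞)) ^ b ≠ 0 := by positivity
  have h2bt : ((2:ℝ≥0∞)) ^ b ≠ ⊤ := by
    apply ENNReal.pow_ne_top; norm_num
  have hhalf : (1/2 : ℝ≥0∞) ^ b = ((2:ℝ≥0∞) ^ b)⁻¹ := by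
    rw [one_div, ← ENNReal.inv_pow]
  rw [hhalf, ← div_eq_mul_inv]
  rw [ENNReal.div_lt_iff (Or.inl h2b) (Or.inl h2bt), one_mul]
  have : ((2:ℝ≥0∞)) ^ b = ((2^b : ℕ) : ℝ≥0∞) := by push_cast; ring
  rw [this]
  exact_mod_cast Nat.sub_lt (Nat.pos_of_ne_zero (by positivity)) one_pos

lemma cseq_pow (b : ℕ) (hb : 0 < b) (k r : ℕ) : cseq b (b * k + r) ≤ rho b ^ k := by
  induction k with
  | zero => simpa using cseq_le_one b r
  | succ k ih =>
    have : b * (k+1) + r = (b * k + r) + b := by ring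
    rw [this]
    calc cseq b ((b * k + r) + b) ≤ rho b * cseq b (b * k + r) := cseq_rec b _ hb
      _ ≤ rho b * rho b ^ k := by exact mul_le_mul' (le_refl _) ih
      _ = rho b ^ (k + 1) := by ring

lemma cseq_le (b : ℕ) (hb : 0 < b) (n : ℕ) : cseq b n ≤ rho b ^ (n / b) := by
  have h : n = b * (n / b) + n % b := (Nat.div_add_mod n b).symm
  calc cseq b n = cseq b (b * (n / b) + n % b) := by rw [← h]
    _ ≤ rho b ^ (n / b) := cseq_pow b hb _ _

lemma good_tsum_ne_top (b : ℕ) (hb : 0 < b) :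
    ∑' l : List Bool, Set.indicator (Good b) (fun l => (1/2 : ℝ≥0∞) ^ l.length) l ≠ ⊤ := by
  classical
  have : NeZero b := ⟨Nat.pos_iff_ne_zero.1 hb⟩
  have hswap : ∑' l : List Bool, Set.indicator (Good b) (fun l => (1/2 : ℝ≥0∞) ^ l.length) l
      = ∑' n : ℕ, cseq b n := by
    calc ∑' l : List Bool, Set.indicator (Good b) (fun l => (1/2 : ℝ≥0∞) ^ l.length) l
        = ∑' (l : List Bool) (n : ℕ), Set.indicator (Good b ∩ {l | l.length = n})
            (fun l => (1/2 : ℝ≥0∞) ^ l.length) l := by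
          apply tsum_congr
          intro l
          rw [tsum_eq_single l.length]
          · by_cases hm : l ∈ Good b
            · rw [Set.indicator_of_mem hm,
                Set.indicator_of_mem (s := Good b ∩ {l' : List Bool | l'.length = l.length})
                  (Set.mem_inter hm rfl)]
            · rw [Set.indicator_of_notMem hm, Set.indicator_of_notMem (fun h => hm h.1)]
          · intro n hn
            exact Set.indicator_of_notMem (fun h => hn (h.2.symm)) _
      _ = ∑' (n : ℕ) (l : List Bool), Set.indicator (Good b ∩ {l | l.length = n})
            (fun l => (1/2 : ℝ≥0∞) ^ l.length) l := ENNReal.tsum_comm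
      _ = ∑' n : ℕ, cseq b n := rfl
  rw [hswap]
  have hle : ∑' n : ℕ, cseq b n ≤ ∑' n : ℕ, rho b ^ (n / b) :=
    ENNReal.tsum_le_tsum (fun n => cseq_le b hb n)
  have hre : ∑' n : ℕ, rho b ^ (n / b) = ∑' p : ℕ × Fin b, rho b ^ p.1 := by
    rw [← Equiv.tsum_eq (Nat.divModEquiv b).symm (fun n : ℕ => rho b ^ (n / b))]
    apply tsum_congr
    intro p
    congr 1
    rw [Nat.divModEquiv_symm_apply, mul_comm, Nat.mul_add_div hb, Nat.div_eq_of_lt p.2.2,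
      add_zero]
  have hone : (1 : ℝ≥0∞) - rho b ≠ 0 := by
    rw [ne_eq, tsub_eq_zero_iff_le]
    exact not_le.2 (rho_lt_one b)
  have hfin : ∑' p : ℕ × Fin b, rho b ^ p.1 ≠ ⊤ := by
    rw [ENNReal.tsum_prod (f := fun (k : ℕ) (_ : Fin b) => rho b ^ k)]
    simp_rw [tsum_fintype, Finset.sum_const, Finset.card_univ,
      Fintype.card_fin, nsmul_eq_mul, ENNReal.tsum_mul_left]
    apply ENNReal.mul_ne_top (by simp)
    rw [ENNReal.tsum_geometric]
    exact ENNReal.inv_ne_top.2 hone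
  exact ne_top_of_le_ne_top hfin (hle.trans (le_of_eq hre))


lemma steps_good {L E : ℤ} (q : List ℤ) (hnn : IsNNPath q)
    (hge : ∀ x ∈ q, L ≤ x) (hle : ∀ x ∈ q, x ≤ E) :
    stepsOf q ∈ Good ((E - L).toNat + 1) := by
  intro u hu hcontra
  set b := (E - L).toNat + 1 with hb
  have hlen : (stepsOf q).length = q.length - 1 := stepsOf_length q
  have hub : u + b < q.length := by omega
  have hsteps : ∀ j, j < b → ∃ h' : u + j < (stepsOf q).length, (stepsOf q)[u+j] = true := by
    intro j hj
    refine ⟨by omega, ?_⟩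
    have h1 : (((stepsOf q).drop u).take b)[j]'(by
        rw [List.length_take, List.length_drop]; omega) =
        (List.replicate b true)[j]'(by rw [List.length_replicate]; omega) :=
      List.getElem_of_eq hcontra _
    rw [List.getElem_take, List.getElem_drop, List.getElem_replicate] at h1
    exact h1
  have hblock := block_up q u b hub hsteps
  have h1 : L ≤ q[u]'(by omega) := hge _ (List.getElem_mem _)
  have h2 : q[u + b]'hub ≤ E := hle _ (List.getElem_mem _)
  have hbz : (b : ℤ) = E - L + 1 := by
    rw [hb]
    push_cast
    rw [Int.toNat_of_nonneg (by omega)]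
  omega

end Aux

/-- For a SRW excursion from `L` conditioned to go right, with maximum `E`, and any site
`i` strictly between `L` and `E`, the conditional probability that the excursion visits `i`
an even number of times, given the parities of the local times on `[L, i)` and given `E`,
lies strictly between 1/6 and 5/6. -/
theorem stmt0 (L E i : ℤ) (hLi : L < i) (hiE : i < E) (f : ℤ → ℕ) :
    ∀ S : Set (List ℤ), S = {q | IsRightExcursion L q ∧ q.maximum = (E : WithBot ℤ) ∧
        ∀ j, L ≤ j → j < i → parity q j = f j} →
    (∑' q : List ℤ, Set.indicator S pathWeight q) ≠ 0 →
      1/6 < (∑' q : List ℤ, Set.indicator (S ∩ {q | parity q i = 0}) pathWeight q) /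
              (∑' q : List ℤ, Set.indicator S pathWeight q) ∧
      (∑' q : List ℤ, Set.indicator (S ∩ {q | parity q i = 0}) pathWeight q) /
              (∑' q : List ℤ, Set.indicator S pathWeight q) < 5/6 := by
  intro S hS hne
  classical
  have hLE : L < E := hLi.trans hiE
  subst hS
  set S : Set (List ℤ) := {q | IsRightExcursion L q ∧ q.maximum = (E : WithBot ℤ) ∧
      ∀ j, L ≤ j → j < i → parity q j = f j} with hSdef
  set P0 : Set (List ℤ) := {q | parity q i = 0} with hP0
  set P1 : Set (List ℤ) := {q | parity q i = 1} with hP1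
  set N := ∑' q : List ℤ, Set.indicator (S ∩ P0) pathWeight q with hN
  set M := ∑' q : List ℤ, Set.indicator (S ∩ P1) pathWeight q with hM
  set D := ∑' q : List ℤ, Set.indicator S pathWeight q with hD
  -- the insertion map preserves membership in S and flips the parity at i
  have hphiS : ∀ q ∈ S, (phi i q ∈ S) ∧ parity (phi i q) i = (parity q i + 1) % 2 ∧
      pathWeight q = 4 * pathWeight (phi i q) := by
    intro q hq
    rw [hSdef, Set.mem_setOf_eq] at hq
    obtain ⟨hre, hmax, hpar⟩ := hq
    obtain ⟨hre', hmax', hloc, hloci, hw⟩ := phi_spec hLi hiE q hre hmax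
    refine ⟨?_, ?_, hw⟩
    · rw [hSdef, Set.mem_setOf_eq]
      refine ⟨hre', hmax', ?_⟩
      intro j hLj hji
      rw [← hpar j hLj hji]
      unfold parity
      rw [hloc j (by omega) (by omega)]
    · unfold parity
      rw [hloci]
      omega
  -- D = N + M
  have hsplit : D = N + M := by
    rw [hD, hN, hM, ← ENNReal.tsum_add]
    apply tsum_congr
    intro q
    by_cases hq : q ∈ S
    · rcases Nat.mod_two_eq_zero_or_one (localTime q i) with h | h
      · have h0 : q ∈ P0 := h
        have h1 : q ∉ P1 := by rw [hP1, Set.mem_setOf_eq]; unfold parity; omega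
        rw [Set.indicator_of_mem hq, Set.indicator_of_mem (Set.mem_inter hq h0),
          Set.indicator_of_notMem (fun hm => h1 hm.2), add_zero]
      · have h0 : q ∉ P0 := by rw [hP0, Set.mem_setOf_eq]; unfold parity; omega
        have h1 : q ∈ P1 := h
        rw [Set.indicator_of_mem hq, Set.indicator_of_mem (Set.mem_inter hq h1),
          Set.indicator_of_notMem (fun hm => h0 hm.2), zero_add]
    · rw [Set.indicator_of_notMem hq, Set.indicator_of_notMem (fun hm => hq hm.1),
        Set.indicator_of_notMem (fun hm => hq hm.1), add_zero]
  -- N ≤ 4 M and M ≤ 4 N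
  have hNM : N ≤ 4 * M := by
    have key : ∀ q, Set.indicator (S ∩ P0) pathWeight q ≤
        4 * Set.indicator (S ∩ P1) pathWeight (phi i q) := by
      intro q
      by_cases hq : q ∈ S ∩ P0
      · obtain ⟨hqS, hq0⟩ := hq
        obtain ⟨hS', hp', hw'⟩ := hphiS q hqS
        have hq0' : parity q i = 0 := hq0
        have : phi i q ∈ S ∩ P1 := ⟨hS', by rw [hP1, Set.mem_setOf_eq, hp', hq0']⟩
        rw [Set.indicator_of_mem (Set.mem_inter hqS hq0), Set.indicator_of_mem this]
        exact le_of_eq hw'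
      · rw [Set.indicator_of_notMem hq]; exact zero_le
    calc N ≤ ∑' q : List ℤ, 4 * Set.indicator (S ∩ P1) pathWeight (phi i q) :=
          ENNReal.tsum_le_tsum key
      _ = 4 * ∑' q : List ℤ, Set.indicator (S ∩ P1) pathWeight (phi i q) :=
          ENNReal.tsum_mul_left
      _ ≤ 4 * M := mul_le_mul' (le_refl _)
          (ENNReal.tsum_comp_le_tsum_of_injective phi_inj _)
  have hMN : M ≤ 4 * N := by
    have key : ∀ q, Set.indicator (S ∩ P1) pathWeight q ≤
        4 * Set.indicator (S ∩ P0) pathWeight (phi i q) := by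
      intro q
      by_cases hq : q ∈ S ∩ P1
      · obtain ⟨hqS, hq1⟩ := hq
        obtain ⟨hS', hp', hw'⟩ := hphiS q hqS
        have hq1' : parity q i = 1 := hq1
        have : phi i q ∈ S ∩ P0 := ⟨hS', by rw [hP0, Set.mem_setOf_eq, hp', hq1']⟩
        rw [Set.indicator_of_mem (Set.mem_inter hqS hq1), Set.indicator_of_mem this]
        exact le_of_eq hw'
      · rw [Set.indicator_of_notMem hq]; exact zero_le
    calc M ≤ ∑' q : List ℤ, 4 * Set.indicator (S ∩ P0) pathWeight (phi i q) :=
          ENNReal.tsum_le_tsum key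
      _ = 4 * ∑' q : List ℤ, Set.indicator (S ∩ P0) pathWeight (phi i q) :=
          ENNReal.tsum_mul_left
      _ ≤ 4 * N := mul_le_mul' (le_refl _)
          (ENNReal.tsum_comp_le_tsum_of_injective phi_inj _)
  -- D is finite
  have hDtop : D ≠ ⊤ := by
    set b := (E - L).toNat + 1 with hb
    have hbpos : 0 < b := by omega
    have hDeq : D = ∑' q : ↥S, pathWeight ↑q := by rw [hD, tsum_subtype]
    have hval : ∀ q : ↥S, pathWeight ↑q =
        Set.indicator (Good b) (fun l => (1/2 : ℝ≥0∞) ^ l.length) (stepsOf ↑q) := by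
      rintro ⟨q, hq⟩
      rw [hSdef, Set.mem_setOf_eq] at hq
      obtain ⟨⟨⟨hnn, hhead, hlast, hlen, hint⟩, hge⟩, hmax, hpar⟩ := hq
      have hle : ∀ x ∈ q, x ≤ E := (List.maximum_eq_coe_iff.1 hmax).2
      have hgood : stepsOf q ∈ Good b := steps_good q hnn hge hle
      rw [Set.indicator_of_mem hgood]
      show pathWeight q = (1/2 : ℝ≥0∞) ^ (stepsOf q).length
      rw [stepsOf_length]
      rfl
    have hinj : Function.Injective (fun q : ↥S => stepsOf ↑q) := by
      rintro ⟨q, hq⟩ ⟨q', hq'⟩ h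
      rw [hSdef, Set.mem_setOf_eq] at hq hq'
      have h1 : q.head? = some L := hq.1.1.2.1
      have h2 : q'.head? = some L := hq'.1.1.2.1
      have := stepsOf_inj q q' hq.1.1.1 hq'.1.1.1 (by rw [h1, h2]) h
      exact Subtype.ext this
    have hcmp : D ≤ ∑' l : List Bool,
        Set.indicator (Good b) (fun l => (1/2 : ℝ≥0∞) ^ l.length) l := by
      calc D = ∑' q : ↥S, Set.indicator (Good b) (fun l => (1/2 : ℝ≥0∞) ^ l.length)
            (stepsOf ↑q) := by rw [hDeq]; exact tsum_congr hval
        _ ≤ ∑' l : List Bool, Set.indicator (Good b) (fun l => (1/2 : ℝ≥0∞) ^ l.length) l :=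
            ENNReal.tsum_comp_le_tsum_of_injective hinj _
    exact ne_top_of_le_ne_top (good_tsum_ne_top b hbpos) hcmp
  -- now arithmetic
  have hNtop : N ≠ ⊤ := ne_top_of_le_ne_top hDtop (by rw [hsplit]; exact le_self_add)
  have hMtop : M ≠ ⊤ := ne_top_of_le_ne_top hDtop (by rw [hsplit]; exact le_add_self)
  have hN0 : N ≠ 0 := by
    intro h
    apply hne
    rw [← hD] at *
    rw [hsplit, h, zero_add]
    rw [h, mul_zero] at hMN
    exact le_antisymm hMN (zero_le)
  have hM0 : M ≠ 0 := by
    intro h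
    apply hne
    rw [← hD] at *
    rw [hsplit, h, add_zero]
    rw [h, mul_zero] at hNM
    exact le_antisymm hNM (zero_le)
  have hD0 : D ≠ 0 := hne
  have hD5N : D ≤ 5 * N := by
    rw [hsplit]
    calc N + M ≤ N + 4 * N := add_le_add_right hMN N
      _ = 5 * N := by ring
  have h5N4D : 5 * N ≤ 4 * D := by
    rw [hsplit]
    calc 5 * N = N + 4 * N := by ring
      _ ≤ 4 * M + 4 * N := add_le_add_left hNM _
      _ = 4 * (N + M) := by ring
  constructor
  · -- lower bound
    rw [ENNReal.lt_div_iff_mul_lt (Or.inl hD0) (Or.inl hDtop)]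
    -- (1/6) * D < N
    calc (1/6 : ℝ≥0∞) * D ≤ (1/6 : ℝ≥0∞) * (5 * N) := mul_le_mul' (le_refl _) hD5N
      _ = (5/6 : ℝ≥0∞) * N := by
          rw [← mul_assoc]
          congr 1
          rw [div_eq_mul_inv, div_eq_mul_inv, one_mul, mul_comm]
      _ < 1 * N := by
          rw [ENNReal.mul_lt_mul_iff_left hN0 hNtop]
          rw [ENNReal.div_lt_iff (Or.inl (by norm_num)) (Or.inl (by norm_num)), one_mul]
          norm_num
      _ = N := one_mul N
  · -- upper bound
    rw [ENNReal.div_lt_iff (Or.inl hD0) (Or.inl hDtop)]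
    -- N < (5/6) * D
    have h56 : (5/6 : ℝ≥0∞) * D = (5 * D) / 6 := by
      rw [div_eq_mul_inv, div_eq_mul_inv, mul_assoc, mul_comm (6⁻¹ : ℝ≥0∞) D, ← mul_assoc]
    rw [h56, ENNReal.lt_div_iff_mul_lt (Or.inl (by norm_num)) (Or.inl (by norm_num))]
    -- N * 6 < 5 * D
    have h1 : N * 6 = 5 * N + N := by ring
    have h2 : 5 * D = 4 * D + D := by ring
    rw [h1, h2]
    apply ENNReal.add_lt_add_of_le_of_lt
      (ne_top_of_le_ne_top (ENNReal.mul_ne_top (by norm_num) hDtop) h5N4D) h5N4D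
    -- N < D
    rw [hsplit]
    apply ENNReal.lt_add_right hNtop hM0
end

section
/- For any n ≥ 1 and 0 < ε ≤ 1/2 with εn an integer, the sum of binomial coefficients S = Σ_{i=0}^{εn} C(n, i) satisfies log S ≤ H(ε)·n, where H is the binary entropy function with natural logarithm. -/
/-- Entropy bound on Hamming balls: for `n ≥ 1` and `0 < ε ≤ 1/2` with `εn = k` an integer,
`log (Σ_{i=0}^{k} C(n,i)) ≤ H(k/n)·n` where `H` is the binary entropy (natural log). -/
theorem stmt6 (n k : ℕ) (hn : 1 ≤ n) (hk : 0 < k) (h2 : 2 * k ≤ n) :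
    Real.log (∑ i ∈ Finset.range (k + 1), (n.choose i : ℝ)) ≤
      (-(k / n : ℝ) * Real.log (k / n) - (1 - k / n) * Real.log (1 - k / n)) * n := by
  have hn0 : (0:ℝ) < n := by exact_mod_cast hn
  set p : ℝ := (k : ℝ) / n with hp
  have hkn : k ≤ n := le_trans (Nat.le_mul_of_pos_left k (by norm_num)) h2
  have hp0 : 0 < p := div_pos (by exact_mod_cast hk) hn0
  have hp2 : p ≤ 1/2 := by
    rw [hp, div_le_div_iff₀ hn0 (by norm_num)]
    have : (2:ℝ) * k ≤ n := by exact_mod_cast h2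
    linarith
  have h1p : 0 < 1 - p := by linarith
  have hple : p ≤ 1 - p := by linarith
  -- key: S * p^k * (1-p)^(n-k) ≤ 1
  have key : (∑ i ∈ Finset.range (k + 1), (n.choose i : ℝ)) * (p ^ k * (1-p) ^ (n - k)) ≤ 1 := by
    have h1 : (∑ i ∈ Finset.range (k + 1), (n.choose i : ℝ)) * (p ^ k * (1-p) ^ (n - k))
        ≤ ∑ i ∈ Finset.range (k + 1), (n.choose i : ℝ) * (p ^ i * (1-p) ^ (n - i)) := by
      rw [Finset.sum_mul]
      apply Finset.sum_le_sum
      intro i hi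
      rw [Finset.mem_range, Nat.lt_succ_iff] at hi
      have hterm : p ^ k * (1-p) ^ (n - k) ≤ p ^ i * (1-p) ^ (n - i) := by
        have e1 : p ^ k = p ^ i * p ^ (k - i) := by
          rw [← pow_add]; congr 1; omega
        have e2 : (1-p) ^ (n - i) = (1-p) ^ (k - i) * (1-p) ^ (n - k) := by
          rw [← pow_add]; congr 1; omega
        rw [e1, e2]
        have : p ^ (k - i) ≤ (1-p) ^ (k - i) :=
          pow_le_pow_left₀ hp0.le hple _
        calc p ^ i * p ^ (k-i) * (1-p) ^ (n-k)
            ≤ p ^ i * (1-p) ^ (k-i) * (1-p) ^ (n-k) := by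
              apply mul_le_mul_of_nonneg_right
              · exact mul_le_mul_of_nonneg_left this (pow_nonneg hp0.le _)
              · positivity
          _ = p ^ i * ((1-p) ^ (k-i) * (1-p) ^ (n-k)) := by ring
      exact mul_le_mul_of_nonneg_left hterm (by positivity)
    have h2' : ∑ i ∈ Finset.range (k + 1), (n.choose i : ℝ) * (p ^ i * (1-p) ^ (n - i))
        ≤ ∑ i ∈ Finset.range (n + 1), (n.choose i : ℝ) * (p ^ i * (1-p) ^ (n - i)) := by
      apply Finset.sum_le_sum_of_subset_of_nonneg
      · exact Finset.range_subset_range.mpr (by omega)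
      · intro i _ _; positivity
    have h3 : ∑ i ∈ Finset.range (n + 1), (n.choose i : ℝ) * (p ^ i * (1-p) ^ (n - i)) = 1 := by
      calc ∑ i ∈ Finset.range (n + 1), (n.choose i : ℝ) * (p ^ i * (1-p) ^ (n - i))
          = ∑ i ∈ Finset.range (n + 1), p ^ i * (1-p) ^ (n-i) * (n.choose i : ℝ) := by
            apply Finset.sum_congr rfl; intro i _; ring
        _ = (p + (1-p)) ^ n := (add_pow p (1-p) n).symm
        _ = 1 := by norm_num
    linarith
  have hSpos : 0 < ∑ i ∈ Finset.range (k + 1), (n.choose i : ℝ) := by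
    apply Finset.sum_pos
    · intro i hi
      rw [Finset.mem_range, Nat.lt_succ_iff] at hi
      exact_mod_cast Nat.choose_pos (le_trans hi hkn)
    · exact ⟨0, Finset.mem_range.mpr (by omega)⟩
  have hSle : (∑ i ∈ Finset.range (k + 1), (n.choose i : ℝ)) ≤ (p ^ k * (1-p) ^ (n - k))⁻¹ := by
    rw [inv_eq_one_div, le_div_iff₀ (by positivity)]
    exact key
  have hlog : Real.log (∑ i ∈ Finset.range (k + 1), (n.choose i : ℝ))
      ≤ -(k * Real.log p) - (n - k : ℝ) * Real.log (1 - p) := by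
    calc Real.log (∑ i ∈ Finset.range (k + 1), (n.choose i : ℝ))
        ≤ Real.log ((p ^ k * (1-p) ^ (n - k))⁻¹) := Real.log_le_log hSpos hSle
      _ = -(k * Real.log p) - (n - k : ℝ) * Real.log (1 - p) := by
          rw [Real.log_inv, Real.log_mul (by positivity) (by positivity),
            Real.log_pow, Real.log_pow]
          have : ((n - k : ℕ) : ℝ) = (n : ℝ) - k := by
            push_cast [Nat.cast_sub hkn]; ring
          rw [this]; ring
  refine hlog.trans_eq ?_
  have hpn : p * n = k := by rw [hp]; field_simp
  have h1pn : (1 - p) * n = (n : ℝ) - k := by rw [hp]; field_simp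
  have : (-p * Real.log p - (1 - p) * Real.log (1 - p)) * n
      = -((p * n) * Real.log p) - ((1 - p) * n) * Real.log (1 - p) := by ring
  rw [this, hpn, h1pn]
end
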